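/- With notation as in the context, h^4 mod pq lies in the Ding–Helleseth class D_0. -/

import Mathlib

theorem stmt0
    (p q : ℕ) (hp : Nat.Prime p) (hq : Nat.Prime q) (hne : p ≠ q)
    (hpo : Odd p) (hqo : Odd q)
    (hgcd : Nat.gcd (p - 1) (q - 1) = 4)
    (e : ℕ) (he : e = (p - 1) * (q - 1) / 4)
    (g h : ℕ)
    (hgp : orderOf (g : ZMod p) = p - 1)
    (hgq : orderOf (g : ZMod q) = q - 1)
    (hhp : (h : ZMod p) = (g : ZMod p))
    (hhq : (h : ZMod q) = 1)
    (D : ℕ → Finset (ZMod (p * q)))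
    (hD : ∀ i, D i = (Finset.range (e / 4) ×ˢ Finset.range 4).image
        (fun sj => (g : ZMod (p * q)) ^ (4 * sj.1 + i) * (h : ZMod (p * q)) ^ sj.2))
 :
    (h : ZMod (p * q)) ^ 4 ∈ D 0 := by
  obtain ⟨a, ha⟩ : 4 ∣ p - 1 := hgcd ▸ Nat.gcd_dvd_left _ _
  obtain ⟨b, hb⟩ : 4 ∣ q - 1 := hgcd ▸ Nat.gcd_dvd_right _ _
  have hp2 := hp.two_le
  have hq2 := hq.two_le
  have ha0 : 0 < a := by omega
  have hb0 : 0 < b := by omega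
  have hab : Nat.Coprime a b := by
    have h4 : Nat.gcd (4 * a) (4 * b) = 4 := by rw [← ha, ← hb]; exact hgcd
    rw [Nat.gcd_mul_left] at h4
    unfold Nat.Coprime; omega
  obtain ⟨x, hx1, hx2⟩ := Nat.chineseRemainder hab 1 0
  set s := x % (a * b) with hs
  have hslt : s < a * b := Nat.mod_lt _ (by positivity)
  have hsx : s ≡ x [MOD a * b] := Nat.mod_modEq x (a * b)
  have hsa : s ≡ 1 [MOD a] := ((hsx.of_dvd ⟨b, rfl⟩)).trans hx1
  have hsb : s ≡ 0 [MOD b] := ((hsx.of_dvd ⟨a, Nat.mul_comm a b⟩)).trans hx2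
  -- e / 4 = a * b
  have heab : e / 4 = a * b := by
    have : e = 4 * (a * b) := by
      rw [he, ha, hb]
      have : 4 * a * (4 * b) = 4 * (4 * (a * b)) := by ring
      rw [this, Nat.mul_div_cancel_left _ (by norm_num)]
    omega
  have co : Nat.Coprime p q := (Nat.coprime_primes hp hq).mpr hne
  rw [hD 0]
  apply Finset.mem_image.mpr
  refine ⟨(s, 0), Finset.mem_product.mpr ⟨Finset.mem_range.mpr (heab ▸ hslt),
    Finset.mem_range.mpr (by norm_num)⟩, ?_⟩
  have key : (g : ZMod (p * q)) ^ (4 * s + 0) * (h : ZMod (p * q)) ^ 0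
      = (h : ZMod (p * q)) ^ 4 := by
    apply (ZMod.chineseRemainder co).injective
    rw [map_mul, map_pow, map_pow, map_pow, map_natCast, map_natCast]
    ext
    · simp only [Prod.fst_natCast, Prod.fst_mul, Prod.pow_fst, hhp, pow_zero, mul_one,
        Nat.add_zero]
      rw [← pow_mod_orderOf, hgp]
      have hmod : (4 * s) % (p - 1) = 4 % (p - 1) := by
        have : 4 * s ≡ 4 * 1 [MOD 4 * a] := Nat.ModEq.mul_left' 4 hsa
        rw [ha]; simpa [Nat.ModEq] using this
      rw [hmod, ← hgp, pow_mod_orderOf]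
    · simp only [Prod.snd_natCast, Prod.snd_mul, Prod.pow_snd, hhq, one_pow, pow_zero,
        mul_one, Nat.add_zero]
      obtain ⟨m, hm⟩ : b ∣ s := (Nat.modEq_zero_iff_dvd).mp hsb
      have : 4 * s = (q - 1) * m := by rw [hb, hm]; ring
      rw [this, pow_mul, ← hgq, pow_orderOf_eq_one, one_pow]
  exact key
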